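/- arXiv:1112.3845 — 2 statements merged into one kernel-verified Lean document; each statement's English description precedes it below -/
import Mathlib

section
/- Let $f : \mathbb{R}^n \to [0,\infty)$ be a non-negative convex function with $f(0) = 0$ that is radially symmetric in the last $k$ variables, i.e., $f(x,y) = \tilde f(x,|y|)$ for some $\tilde f : \mathbb{R}^{n-k+1} \to [0,\infty)$. Then there exist sequences $\{a_j\} \subset \mathbb{R}^{n-k}$, $\{b_j\}, \{c_j\} \subset \mathbb{R}$ such that for every $\xi = (\xi_x, \xi_y) \in \mathbb{R}^{n-k}\times\mathbb{R}^k$, $f(\xi) = \sup_{j \in \mathbb{N}} (a_j \cdot \xi_x + b_j |\xi_y| + c_j)^+$, and moreover for each $j$ the function $\xi \mapsto (a_j \cdot \xi_x + b_j |\xi_y| + c_j)^+$ is convex. -/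
open MeasureTheory
open scoped RealInnerProductSpace

lemma exists_subgradient_of_convexOn {E : Type*} [NormedAddCommGroup E] [NormedSpace ℝ E]
    [FiniteDimensional ℝ E] (f : E → ℝ) (hconv : ConvexOn ℝ Set.univ f) (p : E) :
    ∃ L : E →L[ℝ] ℝ, ∀ ξ, f p + (L ξ - L p) ≤ f ξ := by
  have hcont : Continuous f := by
    rw [← continuousOn_univ]
    exact hconv.continuousOn isOpen_univ
  set S : Set (E × ℝ) := {q | f q.1 < q.2} with hS
  have hSconv : Convex ℝ S := by
    have := hconv.convex_strict_epigraph
    simpa [S] using this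
  have hSopen : IsOpen S := isOpen_lt (hcont.comp continuous_fst) continuous_snd
  have hpf : (p, f p) ∉ S := by simp [S]
  obtain ⟨Φ, hΦ⟩ := geometric_hahn_banach_point_open hSconv hSopen hpf
  set lam : ℝ := Φ (0, 1) with hlam
  have key : ∀ (x : E) (t : ℝ), f x < t → Φ (p, f p) < Φ (x, 0) + t * lam := by
    intro x t ht
    have := hΦ (x, t) ht
    have hxt : (x, t) = (x, 0) + t • ((0 : E), (1 : ℝ)) := by simp [Prod.ext_iff]
    rw [hxt, map_add, _root_.map_smul] at this
    simpa [smul_eq_mul, mul_comm] using this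
  have hlam_pos : 0 < lam := by
    rcases lt_or_ge 0 lam with h | h
    · exact h
    · exfalso
      have hfp : Φ (p, f p) = Φ (p, 0) + f p * lam := by
        have hxt : ((p : E), f p) = (p, 0) + f p • ((0 : E), (1 : ℝ)) := by simp [Prod.ext_iff]
        rw [hxt, map_add, _root_.map_smul]
        simp [smul_eq_mul, mul_comm, hlam]
      have h1 := key p (f p + 1) (by linarith)
      rw [hfp] at h1
      nlinarith
  refine ⟨(-(lam⁻¹)) • (Φ.comp (ContinuousLinearMap.inl ℝ E ℝ)), fun ξ => ?_⟩
  have h2 : ∀ ε > 0, Φ (p, f p) < Φ (ξ, 0) + (f ξ + ε) * lam := fun ε hε =>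
    key ξ (f ξ + ε) (by linarith)
  have h3 : Φ (p, f p) ≤ Φ (ξ, 0) + f ξ * lam := by
    by_contra hc
    push_neg at hc
    have hε : 0 < (Φ (p, f p) - (Φ (ξ, 0) + f ξ * lam)) / lam :=
      div_pos (by linarith) hlam_pos
    have := h2 _ hε
    rw [add_mul] at this
    have : (Φ (p, f p) - (Φ (ξ, 0) + f ξ * lam)) / lam * lam
        = Φ (p, f p) - (Φ (ξ, 0) + f ξ * lam) := div_mul_cancel₀ _ hlam_pos.ne'
    nlinarith [h2 _ hε]
  have hfp : Φ (p, f p) = Φ (p, 0) + f p * lam := by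
    have hxt : ((p : E), f p) = (p, 0) + f p • ((0 : E), (1 : ℝ)) := by simp [Prod.ext_iff]
    rw [hxt, map_add, _root_.map_smul]
    simp [smul_eq_mul, mul_comm, hlam]
  rw [hfp] at h3
  simp only [ContinuousLinearMap.coe_smul', Pi.smul_apply, ContinuousLinearMap.comp_apply,
    ContinuousLinearMap.inl_apply, smul_eq_mul]
  have := (div_le_iff₀ hlam_pos).mpr (by linarith : Φ (p, 0) - Φ (ξ, 0) ≤ (f ξ - f p) * lam)
  have hh : (Φ (p, 0) - Φ (ξ, 0)) / lam ≤ f ξ - f p := this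
  have : -(lam⁻¹) * Φ (ξ, 0) - -(lam⁻¹) * Φ (p, 0) = (Φ (p, 0) - Φ (ξ, 0)) / lam := by
    field_simp
    ring
  linarith [hh, this.symm ▸ hh]

/-- A non-negative convex function on `ℝⁿ = ℝ^{n-k}_x × ℝ^k_y` vanishing at `0` and radially
symmetric in the last `k` variables is the countable supremum of positive parts of
"radial affine" functions `ξ ↦ (a·ξ_x + b|ξ_y| + c)⁺`, each of which is convex. -/
theorem convex_radial_eq_iSup_posPart_radialAffine {m k : ℕ}
    (f : EuclideanSpace ℝ (Fin m) × EuclideanSpace ℝ (Fin k) → ℝ)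
    (hf0 : ∀ ξ, 0 ≤ f ξ) (hconv : ConvexOn ℝ Set.univ f) (hzero : f 0 = 0)
    (hradial : ∃ ft : EuclideanSpace ℝ (Fin m) × ℝ → ℝ,
      ∀ x y, f (x, y) = ft (x, ‖y‖)) :
    ∃ (a : ℕ → EuclideanSpace ℝ (Fin m)) (b c : ℕ → ℝ),
      (∀ ξ : EuclideanSpace ℝ (Fin m) × EuclideanSpace ℝ (Fin k),
        f ξ = ⨆ j : ℕ, max (⟪a j, ξ.1⟫ + b j * ‖ξ.2‖ + c j) 0) ∧
      (∀ j : ℕ, ConvexOn ℝ Set.univ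
        (fun ξ : EuclideanSpace ℝ (Fin m) × EuclideanSpace ℝ (Fin k) =>
          max (⟪a j, ξ.1⟫ + b j * ‖ξ.2‖ + c j) 0)) := by
  classical
  obtain ⟨ft, hft⟩ := hradial
  have hcont : Continuous f := by
    rw [← continuousOn_univ]
    exact hconv.continuousOn isOpen_univ
  set p : ℕ → EuclideanSpace ℝ (Fin m) × EuclideanSpace ℝ (Fin k) :=
    TopologicalSpace.denseSeq _ with hp
  choose L hL using fun j => exists_subgradient_of_convexOn f hconv (p j)
  set a : ℕ → EuclideanSpace ℝ (Fin m) := fun j =>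
    (InnerProductSpace.toDual ℝ _).symm ((L j).comp (ContinuousLinearMap.inl ℝ _ _)) with ha
  set v : ℕ → EuclideanSpace ℝ (Fin k) := fun j =>
    (InnerProductSpace.toDual ℝ _).symm ((L j).comp (ContinuousLinearMap.inr ℝ _ _)) with hv
  set b : ℕ → ℝ := fun j => ‖v j‖ with hb
  set c : ℕ → ℝ := fun j => f (p j) - L j (p j) with hc
  have hLa : ∀ j x y, L j (x, y) = ⟪a j, x⟫ + ⟪v j, y⟫ := by
    intro j x y
    have hxy : ((x, y) : EuclideanSpace ℝ (Fin m) × EuclideanSpace ℝ (Fin k))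
        = (x, 0) + (0, y) := by simp
    rw [hxy, map_add]
    simp [ha, hv, InnerProductSpace.toDual_symm_apply]
  have hlin : ∀ j ξ, L j ξ + c j ≤ f ξ := by
    intro j ξ
    have := hL j ξ
    simp only [hc]
    linarith
  set T : ℕ → EuclideanSpace ℝ (Fin m) × EuclideanSpace ℝ (Fin k) → ℝ :=
    fun j ξ => max (⟪a j, ξ.1⟫ + b j * ‖ξ.2‖ + c j) 0 with hT
  have hTle : ∀ j ξ, T j ξ ≤ f ξ := by
    intro j ξ
    obtain ⟨x, y⟩ := ξ
    apply max_le _ (hf0 (x, y))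
    by_cases hvj : v j = 0
    · have h := hlin j (x, y)
      rw [hLa j x y] at h
      simpa [hb, hvj] using h
    · set y' : EuclideanSpace ℝ (Fin k) := (‖y‖ / ‖v j‖) • v j with hy'def
      have hy' : ‖y'‖ = ‖y‖ := by
        rw [hy'def, norm_smul, Real.norm_eq_abs,
          abs_of_nonneg (div_nonneg (norm_nonneg _) (norm_nonneg _)), div_mul_eq_mul_div,
          mul_div_assoc, div_self (norm_ne_zero_iff.mpr hvj), mul_one]
      have hiv : ⟪v j, y'⟫ = b j * ‖y‖ := by
        have hvn : ‖v j‖ ≠ 0 := norm_ne_zero_iff.mpr hvj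
        rw [hy'def, real_inner_smul_right, real_inner_self_eq_norm_mul_norm, hb]
        field_simp
      have h := hlin j (x, y')
      rw [hLa j x y', hiv] at h
      calc ⟪a j, x⟫ + b j * ‖y‖ + c j ≤ f (x, y') := h
        _ = ft (x, ‖y'‖) := hft x y'
        _ = ft (x, ‖y‖) := by rw [hy']
        _ = f (x, y) := (hft x y).symm
  have hTge : ∀ j, f (p j) ≤ T j (p j) := by
    intro j
    refine le_trans ?_ (le_max_left _ _)
    have h1 : f (p j) = L j (p j) + c j := by simp [hc]
    have h2 : L j (p j) = ⟪a j, (p j).1⟫ + ⟪v j, (p j).2⟫ := by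
      rw [← hLa j (p j).1 (p j).2]
    have h3 : ⟪v j, (p j).2⟫ ≤ b j * ‖(p j).2‖ := by
      calc ⟪v j, (p j).2⟫ ≤ ‖v j‖ * ‖(p j).2‖ := real_inner_le_norm _ _
        _ = b j * ‖(p j).2‖ := by rw [hb]
    linarith
  have hbdd : ∀ ξ, BddAbove (Set.range fun j => T j ξ) := by
    intro ξ
    refine ⟨f ξ, ?_⟩
    rintro _ ⟨j, rfl⟩
    exact hTle j ξ
  have hTconv : ∀ j, ConvexOn ℝ Set.univ (T j) := by
    intro j
    refine ⟨convex_univ, fun ξ _ η _ s t hs ht hst => ?_⟩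
    simp only [hT, smul_eq_mul]
    apply max_le
    · have hi : ⟪a j, (s • ξ + t • η).1⟫ = s * ⟪a j, ξ.1⟫ + t * ⟪a j, η.1⟫ := by
        show ⟪a j, s • ξ.1 + t • η.1⟫ = _
        rw [inner_add_right, real_inner_smul_right, real_inner_smul_right]
      have hn : ‖(s • ξ + t • η).2‖ ≤ s * ‖ξ.2‖ + t * ‖η.2‖ := by
        calc ‖(s • ξ + t • η).2‖ = ‖s • ξ.2 + t • η.2‖ := by rfl
          _ ≤ ‖s • ξ.2‖ + ‖t • η.2‖ := norm_add_le _ _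
          _ = s * ‖ξ.2‖ + t * ‖η.2‖ := by
            rw [norm_smul, norm_smul, Real.norm_eq_abs, Real.norm_eq_abs,
              abs_of_nonneg hs, abs_of_nonneg ht]
      have hbn : (0:ℝ) ≤ b j := norm_nonneg _
      have f2 : b j * ‖(s • ξ + t • η).2‖ ≤ b j * (s * ‖ξ.2‖ + t * ‖η.2‖) :=
        mul_le_mul_of_nonneg_left hn hbn
      have f2' : b j * (s * ‖ξ.2‖ + t * ‖η.2‖)
          = s * (b j * ‖ξ.2‖) + t * (b j * ‖η.2‖) := by ring
      have hcc : c j = s * c j + t * c j := by rw [← add_mul, hst, one_mul]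
      have f3 : ⟪a j, ξ.1⟫ + b j * ‖ξ.2‖ + c j
          ≤ max (⟪a j, ξ.1⟫ + b j * ‖ξ.2‖ + c j) 0 := le_max_left _ _
      have f4 : ⟪a j, η.1⟫ + b j * ‖η.2‖ + c j
          ≤ max (⟪a j, η.1⟫ + b j * ‖η.2‖ + c j) 0 := le_max_left _ _
      have f5 := mul_le_mul_of_nonneg_left f3 hs
      have f6 := mul_le_mul_of_nonneg_left f4 ht
      rw [hi]
      nlinarith [f2, f5, f6]
    · exact add_nonneg (mul_nonneg hs (le_max_right _ _)) (mul_nonneg ht (le_max_right _ _))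
  set g : EuclideanSpace ℝ (Fin m) × EuclideanSpace ℝ (Fin k) → ℝ :=
    fun ξ => ⨆ j, T j ξ with hg
  have hgconv : ConvexOn ℝ Set.univ g := by
    refine ⟨convex_univ, fun ξ _ η _ s t hs ht hst => ?_⟩
    refine ciSup_le fun j => ?_
    calc T j (s • ξ + t • η) ≤ s • T j ξ + t • T j η :=
        (hTconv j).2 trivial trivial hs ht hst
      _ ≤ s • g ξ + t • g η := by
        simp only [smul_eq_mul]
        exact add_le_add (mul_le_mul_of_nonneg_left (le_ciSup (hbdd ξ) j) hs)
          (mul_le_mul_of_nonneg_left (le_ciSup (hbdd η) j) ht)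
  have hgcont : Continuous g := by
    rw [← continuousOn_univ]
    exact hgconv.continuousOn isOpen_univ
  have heq : f = g := by
    refine Continuous.ext_on (TopologicalSpace.denseRange_denseSeq _) hcont hgcont ?_
    rintro _ ⟨j, rfl⟩
    refine le_antisymm (le_trans (hTge j) (le_ciSup (hbdd (p j)) j))
      (ciSup_le fun i => hTle i (p j))
  exact ⟨a, b, c, fun ξ => congrFun heq ξ, hTconv⟩
end

section
/- Let $\beta \in L^0(U;\mathbb{R}^k)$ be a measurable function, finite a.e., on a connected open set $U \subset \mathbb{R}^{m}$, such that for each coordinate direction $e_i$ and a.e. line $R$ parallel to $e_i$, the restriction of each truncation $\beta^T$ (defined componentwise by truncating at level $T$) to $U \cap R$ is locally absolutely continuous with derivative zero a.e. on the set where $|\beta_j| \le T$. Then $\beta$ is a.e. equal to a constant on $U$. -/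
open MeasureTheory

/-- Truncation of a real number at level `T`. -/
noncomputable def truncAt (T r : ℝ) : ℝ := max (min r T) (-T)

open Set

lemma key_no_increase {S : Set ℝ} {g h : ℝ → ℝ} {T : ℝ}
    (hgT : ∀ s, |g s| ≤ T)
    (hzero : ∀ᵐ s : ℝ ∂volume, s ∈ S → |g s| < T → h s = 0)
    (hFTC : ∀ a b : ℝ, Set.uIcc a b ⊆ S →
      IntervalIntegrable h volume a b ∧ g b - g a = ∫ s in a..b, h s)
    {a b : ℝ} (hab : a ≤ b) (hsub : Set.uIcc a b ⊆ S) : ¬ (g a < g b) := by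
  intro hlt
  have hIcc : Icc a b ⊆ S := by rwa [Set.uIcc_of_le hab] at hsub
  -- continuity of g on [a,b]
  have hprim : ContinuousOn (fun t => ∫ s in a..t, h s) (Set.uIcc a b) :=
    intervalIntegral.continuousOn_primitive_interval' (hFTC a b hsub).1 Set.left_mem_uIcc
  have gcont : ContinuousOn g (Icc a b) := by
    have : ContinuousOn (fun t => g a + ∫ s in a..t, h s) (Icc a b) := by
      rw [← Set.uIcc_of_le hab]
      exact continuousOn_const.add hprim
    refine this.congr fun t ht => ?_
    have hsub' : Set.uIcc a t ⊆ S := by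
      rw [Set.uIcc_of_le ht.1]
      exact (Icc_subset_Icc le_rfl ht.2).trans hIcc
    have := (hFTC a t hsub').2
    linarith
  obtain ⟨c, hac, hcb⟩ := exists_between hlt
  obtain ⟨c', hcc', hc'b⟩ := exists_between hcb
  have hcT : -T < c := lt_of_le_of_lt (abs_le.mp (hgT a)).1 hac
  have hc'T : c' < T := lt_of_lt_of_le hc'b (abs_le.mp (hgT b)).2
  -- t₂ : first time g hits c'
  set K' : Set ℝ := {t | t ∈ Icc a b ∧ g t = c'} with hK'
  have hK'ne : K'.Nonempty := by
    obtain ⟨t, ht, hgt⟩ := intermediate_value_Icc hab gcont ⟨(hac.trans hcc').le, hc'b.le⟩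
    exact ⟨t, ht, hgt⟩
  have hK'closed : IsClosed K' :=
    ContinuousOn.preimage_isClosed_of_isClosed gcont isClosed_Icc isClosed_singleton
  have hK'bdd : BddBelow K' := ⟨a, fun t ht => ht.1.1⟩
  set t₂ := sInf K' with ht₂def
  have ht₂ : t₂ ∈ K' := IsClosed.csInf_mem hK'closed hK'ne hK'bdd
  have hmin : ∀ t, t ∈ Icc a b → g t = c' → t₂ ≤ t := fun t ht hg => csInf_le hK'bdd ⟨ht, hg⟩
  have hat₂ : a ≤ t₂ := ht₂.1.1
  have ht₂b : t₂ ≤ b := ht₂.1.2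
  have gcont2 : ContinuousOn g (Icc a t₂) := gcont.mono (Icc_subset_Icc le_rfl ht₂b)
  -- t₁ : last time before t₂ that g hits c
  set K : Set ℝ := {t | t ∈ Icc a t₂ ∧ g t = c} with hKdef
  have hKne : K.Nonempty := by
    obtain ⟨t, ht, hgt⟩ := intermediate_value_Icc hat₂ gcont2 ⟨hac.le, by rw [ht₂.2]; exact hcc'.le⟩
    exact ⟨t, ht, hgt⟩
  have hKclosed : IsClosed K :=
    ContinuousOn.preimage_isClosed_of_isClosed gcont2 isClosed_Icc isClosed_singleton
  have hKbdd : BddAbove K := ⟨t₂, fun t ht => ht.1.2⟩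
  set t₁ := sSup K with ht₁def
  have ht₁ : t₁ ∈ K := IsClosed.csSup_mem hKclosed hKne hKbdd
  have hmax : ∀ t, t ∈ Icc a t₂ → g t = c → t ≤ t₁ := fun t ht hg => le_csSup hKbdd ⟨ht, hg⟩
  have hat₁ : a ≤ t₁ := ht₁.1.1
  have ht₁t₂ : t₁ < t₂ := by
    rcases eq_or_lt_of_le ht₁.1.2 with heq | hlt'
    · exfalso; have := ht₁.2; rw [heq, ht₂.2] at this; exact absurd this (ne_of_gt hcc')
    · exact hlt'
  -- on (t₁,t₂), c < g < c'
  have hopen : ∀ t, t ∈ Ioo t₁ t₂ → c < g t ∧ g t < c' := by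
    intro t ⟨h1, h2⟩
    have hta : a ≤ t := hat₁.trans h1.le
    have htt₂ : t ≤ t₂ := h2.le
    constructor
    · by_contra hle
      push_neg at hle
      obtain ⟨t', ht', hgt'⟩ := intermediate_value_Icc htt₂
        (gcont2.mono (Icc_subset_Icc hta le_rfl)) ⟨hle, by rw [ht₂.2]; exact hcc'.le⟩
      have : t' ≤ t₁ := hmax t' ⟨hta.trans ht'.1, ht'.2⟩ hgt'
      exact absurd (h1.trans_le ht'.1) (not_lt.mpr this)
    · by_contra hle
      push_neg at hle
      obtain ⟨t', ht', hgt'⟩ := intermediate_value_Icc h1.le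
        (gcont2.mono (Icc_subset_Icc hat₁ htt₂)) ⟨by rw [ht₁.2]; exact hcc'.le, hle⟩
      have : t₂ ≤ t' := hmin t' ⟨hat₁.trans ht'.1, (ht'.2.trans htt₂).trans ht₂b⟩ hgt'
      exact absurd ((ht'.2.trans_lt h2).trans_le this) (lt_irrefl t')
  -- integral over [t₁,t₂] is zero
  have hsub12 : Set.uIcc t₁ t₂ ⊆ S := by
    rw [Set.uIcc_of_le ht₁t₂.le]
    exact (Icc_subset_Icc hat₁ ht₂b).trans hIcc
  have hne : ∀ᵐ s : ℝ ∂volume, s ≠ t₂ := by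
    rw [ae_iff]
    simp [measure_singleton]
  have hae : ∀ᵐ s : ℝ ∂volume, s ∈ Set.uIoc t₁ t₂ → h s = 0 := by
    filter_upwards [hzero, hne] with s hs hsne hmem
    rw [Set.uIoc_of_le ht₁t₂.le] at hmem
    have hsoo : s ∈ Ioo t₁ t₂ := ⟨hmem.1, lt_of_le_of_ne hmem.2 hsne⟩
    have hsS : s ∈ S := hIcc ⟨hat₁.trans hsoo.1.le, hsoo.2.le.trans ht₂b⟩
    obtain ⟨hc1, hc2⟩ := hopen s hsoo
    exact hs hsS (abs_lt.mpr ⟨hcT.trans hc1, hc2.trans hc'T⟩)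
  have hint : g t₂ - g t₁ = ∫ s in t₁..t₂, h s := (hFTC t₁ t₂ hsub12).2
  have : (∫ s in t₁..t₂, h s) = 0 := by
    rw [intervalIntegral.integral_congr_ae hae]
    simp
  rw [this, ht₁.2, ht₂.2] at hint
  linarith

lemma key_const {S : Set ℝ} {g h : ℝ → ℝ} {T : ℝ}
    (hgT : ∀ s, |g s| ≤ T)
    (hzero : ∀ᵐ s : ℝ ∂volume, s ∈ S → |g s| < T → h s = 0)
    (hFTC : ∀ a b : ℝ, Set.uIcc a b ⊆ S →
      IntervalIntegrable h volume a b ∧ g b - g a = ∫ s in a..b, h s)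
    {a b : ℝ} (hsub : Set.uIcc a b ⊆ S) : g b = g a := by
  have hzero' : ∀ᵐ s : ℝ ∂volume, s ∈ S → |(-g) s| < T → (-h) s = 0 := by
    filter_upwards [hzero] with s hs h1 h2
    simp only [Pi.neg_apply, abs_neg] at h2 ⊢
    rw [hs h1 h2]; ring
  have hFTC' : ∀ a b : ℝ, Set.uIcc a b ⊆ S →
      IntervalIntegrable (-h) volume a b ∧ (-g) b - (-g) a = ∫ s in a..b, (-h) s := by
    intro a b hab
    refine ⟨(hFTC a b hab).1.neg, ?_⟩
    have h1 := (hFTC a b hab).2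
    have h2 : (∫ s in a..b, -h s) = - ∫ s in a..b, h s :=
      intervalIntegral.integral_neg
    simp only [Pi.neg_apply]
    rw [h2]
    linarith
  have hgT' : ∀ s, |(-g) s| ≤ T := fun s => by simpa using hgT s
  rcases le_total a b with hab | hab
  · by_contra hne
    rcases lt_or_gt_of_ne hne with hlt | hlt
    · exact key_no_increase hgT' hzero' hFTC' hab (by simpa using hsub)
        (by simpa using hlt)
    · exact key_no_increase hgT hzero hFTC hab hsub hlt
  · by_contra hne
    rw [Set.uIcc_comm] at hsub
    rcases lt_or_gt_of_ne hne with hlt | hlt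
    · exact key_no_increase hgT hzero hFTC hab hsub hlt
    · exact key_no_increase hgT' hzero' hFTC' hab hsub (by simpa using hlt)

lemma truncAt_abs_le {T : ℝ} (hT : 0 ≤ T) (r : ℝ) : |truncAt T r| ≤ T := by
  rw [truncAt, abs_le]
  refine ⟨le_max_right _ _, max_le (min_le_right _ _) (by linarith)⟩

lemma abs_lt_of_truncAt_abs_lt {T r : ℝ} (h : |truncAt T r| < T) : |r| < T := by
  have hT : 0 < T := lt_of_le_of_lt (abs_nonneg _) h
  by_contra habs
  push_neg at habs
  rw [truncAt] at h
  rcases le_or_gt T r with h1 | h1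
  · rw [min_eq_right h1, max_eq_left (by linarith)] at h
    rw [abs_of_nonneg hT.le] at h
    exact lt_irrefl T h
  · have h2 : r ≤ -T := by
      rcases abs_cases r with ⟨he, _⟩ | ⟨he, _⟩ <;> rw [he] at habs <;> linarith
    rw [min_eq_left (by linarith), max_eq_right (by linarith)] at h
    rw [abs_neg, abs_of_nonneg hT.le] at h
    exact lt_irrefl T h

lemma truncAt_eq_of_abs_le {T r : ℝ} (h : |r| ≤ T) : truncAt T r = r := by
  rw [abs_le] at h
  rw [truncAt, min_eq_left h.2, max_eq_left (by linarith)]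

lemma eq_of_truncAt_eq {u v : ℝ} (h : ∀ n : ℕ, truncAt (n + 1) u = truncAt (n + 1) v) :
    u = v := by
  obtain ⟨n, hn⟩ := exists_nat_ge (max |u| |v|)
  have hu : |u| ≤ (n : ℝ) + 1 := le_trans (le_trans (le_max_left _ _) hn) (by linarith)
  have hv : |v| ≤ (n : ℝ) + 1 := le_trans (le_trans (le_max_right _ _) hn) (by linarith)
  have := h n
  rwa [truncAt_eq_of_abs_le hu, truncAt_eq_of_abs_le hv] at this

lemma good_ae {m k : ℕ} (U : Set (EuclideanSpace ℝ (Fin m)))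
    (β : EuclideanSpace ℝ (Fin m) → EuclideanSpace ℝ (Fin k))
    (hline : ∀ i : Fin m, ∀ T : ℝ, 0 < T →
      ∀ᵐ x ∂(volume : Measure (EuclideanSpace ℝ (Fin m))), ∀ j : Fin k,
        ∃ h : ℝ → ℝ,
          (∀ᵐ s ∂(volume : Measure ℝ),
            (x + s • EuclideanSpace.single i (1 : ℝ) ∈ U ∧
              |β (x + s • EuclideanSpace.single i (1 : ℝ)) j| ≤ T) → h s = 0) ∧
          (∀ a b : ℝ,
            Set.uIcc a b ⊆ {s : ℝ | x + s • EuclideanSpace.single i (1 : ℝ) ∈ U} →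
            IntervalIntegrable h volume a b ∧
              truncAt T (β (x + b • EuclideanSpace.single i (1 : ℝ)) j) -
                truncAt T (β (x + a • EuclideanSpace.single i (1 : ℝ)) j) =
              ∫ s in a..b, h s)) (i : Fin m) :
    ∀ᵐ x ∂(volume : Measure (EuclideanSpace ℝ (Fin m))),
      ∀ a b : ℝ, Set.uIcc a b ⊆ {s : ℝ | x + s • EuclideanSpace.single i (1 : ℝ) ∈ U} →
        β (x + b • EuclideanSpace.single i (1 : ℝ)) =
          β (x + a • EuclideanSpace.single i (1 : ℝ)) := by
  have H := ae_all_iff.mpr (fun n : ℕ => hline i ((n : ℝ) + 1) (by positivity))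
  filter_upwards [H] with x hx a b hsub
  apply PiLp.ext
  intro j
  apply eq_of_truncAt_eq
  intro n
  obtain ⟨h, hz, hftc⟩ := hx n j
  refine key_const (S := {s : ℝ | x + s • EuclideanSpace.single i (1 : ℝ) ∈ U})
    (g := fun s => truncAt ((n : ℝ) + 1) (β (x + s • EuclideanSpace.single i (1 : ℝ)) j))
    (h := h) (T := (n : ℝ) + 1)
    (fun s => truncAt_abs_le (by positivity) _) ?_ (fun a' b' hs => hftc a' b' hs) hsub
  filter_upwards [hz] with s hs hmem hlt
  exact hs ⟨hmem, (abs_lt_of_truncAt_abs_lt hlt).le⟩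

lemma measurePreserving_cross {α β : Type*} [MeasurableSpace α] [MeasurableSpace β]
    (μ : Measure α) (ν : Measure β) [SigmaFinite μ] [SigmaFinite ν] :
    MeasurePreserving (fun p : (α × β) × (α × β) => ((p.2.1, p.1.2), (p.1.1, p.2.2)))
      ((μ.prod ν).prod (μ.prod ν)) ((μ.prod ν).prod (μ.prod ν)) := by
  have p1 := measurePreserving_prodAssoc μ ν (μ.prod ν)
  have p2 := (MeasurePreserving.id μ).prod
    ((measurePreserving_prodAssoc ν μ ν).symm MeasurableEquiv.prodAssoc)
  have p3 := (MeasurePreserving.id μ).prod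
    ((Measure.measurePreserving_swap (μ := ν) (ν := μ)).prod (MeasurePreserving.id ν))
  have p4 := (measurePreserving_prodAssoc μ (μ.prod ν) ν).symm MeasurableEquiv.prodAssoc
  have p5 := (Measure.measurePreserving_swap (μ := μ) (ν := μ.prod ν)).prod (MeasurePreserving.id ν)
  have p6 := measurePreserving_prodAssoc (μ.prod ν) μ ν
  have comp := ((((p6.comp p5).comp p4).comp p3).comp p2).comp p1
  convert comp using 1
  funext p
  rfl

def mixF {m : ℕ} (i : ℕ) (x y : Fin m → ℝ) : Fin m → ℝ := fun j => if (j : ℕ) < i then y j else x j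

lemma measurable_mixF {m : ℕ} (i : ℕ) :
    Measurable (fun p : (Fin m → ℝ) × (Fin m → ℝ) => mixF i p.1 p.2) := by
  apply measurable_pi_lambda
  intro j
  by_cases h : (j : ℕ) < i
  · simp only [mixF, h, if_true]
    exact (measurable_pi_apply j).comp measurable_snd
  · simp only [mixF, h, if_false]
    exact (measurable_pi_apply j).comp measurable_fst

lemma mixF_null {m : ℕ} (i : ℕ) {N : Set (Fin m → ℝ)} (hN : MeasurableSet N)
    (hN0 : volume N = 0) :
    (volume.prod volume : Measure ((Fin m → ℝ) × (Fin m → ℝ)))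
      {p : (Fin m → ℝ) × (Fin m → ℝ) | mixF i p.1 p.2 ∈ N} = 0 := by
  classical
  set pp : Fin m → Prop := fun j => (j : ℕ) < i with hpp
  set ψ := MeasurableEquiv.piEquivPiSubtypeProd (fun _ : Fin m => ℝ) pp with hψdef
  have hψ := volume_preserving_piEquivPiSubtypeProd (fun _ : Fin m => ℝ) pp
  have hcross := measurePreserving_cross
    (volume : Measure ({j : Fin m // pp j} → ℝ)) (volume : Measure ({j : Fin m // ¬ pp j} → ℝ))
  -- the full map
  set Φ := fun p : (Fin m → ℝ) × (Fin m → ℝ) =>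
    (ψ.symm ((ψ p.2).1, (ψ p.1).2), ψ.symm ((ψ p.1).1, (ψ p.2).2)) with hΦdef
  have hΦ : MeasurePreserving Φ (volume.prod volume) (volume.prod volume) := by
    have h1 := hψ.prod hψ
    have h2 := (hψ.symm ψ).prod (hψ.symm ψ)
    exact (h2.comp hcross).comp h1
  have hΦ1 : ∀ p : (Fin m → ℝ) × (Fin m → ℝ), (Φ p).1 = mixF i p.1 p.2 := by
    intro p
    funext j
    by_cases h : pp j
    · simp [hΦdef, hψdef, MeasurableEquiv.piEquivPiSubtypeProd,
        Equiv.piEquivPiSubtypeProd_symm_apply, h, mixF, hpp]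
    · simp [hΦdef, hψdef, MeasurableEquiv.piEquivPiSubtypeProd,
        Equiv.piEquivPiSubtypeProd_symm_apply, h, mixF, hpp]
  have hset : {p : (Fin m → ℝ) × (Fin m → ℝ) | mixF i p.1 p.2 ∈ N} = Φ ⁻¹' (N ×ˢ Set.univ) := by
    ext p
    simp only [Set.mem_setOf_eq, Set.mem_preimage, Set.mem_prod, Set.mem_univ, and_true]
    rw [← hΦ1 p]
  rw [hset, hΦ.measure_preimage ((hN.prod MeasurableSet.univ).nullMeasurableSet)]
  rw [Measure.prod_prod, hN0, zero_mul]

noncomputable def mixE {m : ℕ} (i : ℕ) (x y : EuclideanSpace ℝ (Fin m)) :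
    EuclideanSpace ℝ (Fin m) :=
  ((MeasurableEquiv.toLp 2 (Fin m → ℝ)).symm).symm
    (mixF i (((MeasurableEquiv.toLp 2 (Fin m → ℝ)).symm) x) (((MeasurableEquiv.toLp 2 (Fin m → ℝ)).symm) y))

lemma mixE_apply {m : ℕ} (i : ℕ) (x y : EuclideanSpace ℝ (Fin m)) (j : Fin m) :
    mixE i x y j = if (j : ℕ) < i then y j else x j := rfl

lemma mixE_null {m : ℕ} (i : ℕ) {N : Set (EuclideanSpace ℝ (Fin m))} (hN0 : volume N = 0) :
    (volume.prod volume :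
        Measure (EuclideanSpace ℝ (Fin m) × EuclideanSpace ℝ (Fin m)))
      {p | mixE i p.1 p.2 ∈ N} = 0 := by
  obtain ⟨M, hNM, hMmeas, hM0⟩ := exists_measurable_superset_of_null hN0
  set ψ := (MeasurableEquiv.toLp 2 (Fin m → ℝ)).symm with hψdef
  have hψ := EuclideanSpace.volume_preserving_symm_measurableEquiv_toLp (Fin m)
  set M' : Set (Fin m → ℝ) := ψ.symm ⁻¹' M with hM'def
  have hM'meas : MeasurableSet M' := ψ.symm.measurable hMmeas
  have hM'0 : volume M' = 0 := by
    rw [hM'def, (hψ.symm ψ).measure_preimage hMmeas.nullMeasurableSet]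
    exact hM0
  have hpi := mixF_null i hM'meas hM'0
  have hsub : {p : EuclideanSpace ℝ (Fin m) × EuclideanSpace ℝ (Fin m) | mixE i p.1 p.2 ∈ N}
      ⊆ (Prod.map ψ ψ) ⁻¹' {q : (Fin m → ℝ) × (Fin m → ℝ) | mixF i q.1 q.2 ∈ M'} := by
    intro p hp
    simp only [Set.mem_preimage, Set.mem_setOf_eq, Prod.map, hM'def]
    exact hNM hp
  refine measure_mono_null hsub ?_
  rw [(hψ.prod hψ).measure_preimage]
  · exact hpi
  · exact ((measurable_mixF i) hM'meas).nullMeasurableSet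

def cube {m : ℕ} (c : Fin m → ℝ) (r : ℝ) : Set (EuclideanSpace ℝ (Fin m)) :=
  {x | ∀ j, |x j - c j| < r}

lemma cube_isOpen {m : ℕ} (c : Fin m → ℝ) (r : ℝ) : IsOpen (cube c r) := by
  have : cube c r = ⋂ j, {x : EuclideanSpace ℝ (Fin m) | |x j - c j| < r} := by
    ext x; simp [cube]
  rw [this]
  refine isOpen_iInter_of_finite fun j => ?_
  have hc : Continuous fun x : EuclideanSpace ℝ (Fin m) => |x j - c j| :=
    (((EuclideanSpace.proj j).continuous).sub continuous_const).abs
  exact isOpen_lt hc continuous_const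

lemma cube_nonempty {m : ℕ} (c : Fin m → ℝ) {r : ℝ} (hr : 0 < r) : (cube c r).Nonempty := by
  refine ⟨((MeasurableEquiv.toLp 2 (Fin m → ℝ)).symm).symm c, fun j => ?_⟩
  show |c j - c j| < r
  simpa using hr

lemma cube_const {m k : ℕ} {U : Set (EuclideanSpace ℝ (Fin m))}
    {β : EuclideanSpace ℝ (Fin m) → EuclideanSpace ℝ (Fin k)}
    (hGood : ∀ i : Fin m,
      ∀ᵐ x ∂(volume : Measure (EuclideanSpace ℝ (Fin m))),
        ∀ a b : ℝ, Set.uIcc a b ⊆ {s : ℝ | x + s • EuclideanSpace.single i (1 : ℝ) ∈ U} →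
          β (x + b • EuclideanSpace.single i (1 : ℝ)) =
            β (x + a • EuclideanSpace.single i (1 : ℝ)))
    (c : Fin m → ℝ) {r : ℝ} (hr : 0 < r) (hQU : cube c r ⊆ U) :
    ∃ C : EuclideanSpace ℝ (Fin k),
      ∀ᵐ x ∂(volume : Measure (EuclideanSpace ℝ (Fin m))), x ∈ cube c r → β x = C := by
  set Q := cube c r with hQdef
  have hQopen : IsOpen Q := cube_isOpen c r
  have hQmeas : MeasurableSet Q := hQopen.measurableSet
  set μ := (volume : Measure (EuclideanSpace ℝ (Fin m))).restrict Q with hμdef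
  have hprodres : μ.prod μ = ((volume : Measure (EuclideanSpace ℝ (Fin m))).prod volume).restrict (Q ×ˢ Q) :=
    Measure.prod_restrict Q Q
  have claim : ∀ i : ℕ, i ≤ m → ∀ᵐ p ∂(μ.prod μ), β (mixE i p.1 p.2) = β p.1 := by
    intro i
    induction i with
    | zero =>
      intro _
      refine Filter.Eventually.of_forall fun p => ?_
      have h0 : mixE 0 p.1 p.2 = p.1 := by
        apply PiLp.ext
        intro j
        simp [mixE_apply]
      rw [h0]
    | succ i ih =>
      intro hi1
      have hi : i < m := hi1
      set i' : Fin m := ⟨i, hi⟩ with hi'def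
      have hIH := ih (le_of_lt hi)
      -- a.e. the mixed point is good in direction i'
      have hGi := hGood i'
      rw [Filter.eventually_iff, mem_ae_iff] at hGi
      have hmix0 : (μ.prod μ)
          {p : EuclideanSpace ℝ (Fin m) × EuclideanSpace ℝ (Fin m) | ¬ ∀ a b : ℝ,
            Set.uIcc a b ⊆ {s : ℝ | mixE i p.1 p.2 + s • EuclideanSpace.single i' (1 : ℝ) ∈ U} →
            β (mixE i p.1 p.2 + b • EuclideanSpace.single i' (1 : ℝ)) =
              β (mixE i p.1 p.2 + a • EuclideanSpace.single i' (1 : ℝ))} = 0 := by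
        have h1 := mixE_null (m := m) i (N := {x : EuclideanSpace ℝ (Fin m) | ∀ a b : ℝ,
            Set.uIcc a b ⊆ {s : ℝ | x + s • EuclideanSpace.single i' (1 : ℝ) ∈ U} →
            β (x + b • EuclideanSpace.single i' (1 : ℝ)) =
              β (x + a • EuclideanSpace.single i' (1 : ℝ))}ᶜ) hGi
        rw [hprodres]
        rw [Measure.restrict_apply' (hQmeas.prod hQmeas)]
        exact measure_mono_null (fun p hp => hp.1) h1
      have hGae : ∀ᵐ p ∂(μ.prod μ), ∀ a b : ℝ,
          Set.uIcc a b ⊆ {s : ℝ | mixE i p.1 p.2 + s • EuclideanSpace.single i' (1 : ℝ) ∈ U} →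
          β (mixE i p.1 p.2 + b • EuclideanSpace.single i' (1 : ℝ)) =
            β (mixE i p.1 p.2 + a • EuclideanSpace.single i' (1 : ℝ)) := by
        rw [Filter.eventually_iff, mem_ae_iff]
        exact hmix0
      have hmemae : ∀ᵐ p ∂(μ.prod μ), p ∈ Q ×ˢ Q := by
        rw [hprodres]
        exact ae_restrict_mem (hQmeas.prod hQmeas)
      filter_upwards [hIH, hGae, hmemae] with p hIHp hGp hmemp
      obtain ⟨hx, hy⟩ := hmemp
      set x := p.1
      set y := p.2
      set z := mixE i x y with hzdef
      set d : ℝ := y i' - x i' with hddef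
      have hd : d = y i' - x i' := hddef
      have hzi : z i' = x i' := by
        rw [hzdef, mixE_apply]
        simp [hi'def]
      have hxj := abs_lt.mp (hx i')
      have hyj := abs_lt.mp (hy i')
      have hseg : Set.uIcc 0 d ⊆ {s : ℝ | z + s • EuclideanSpace.single i' (1 : ℝ) ∈ U} := by
        intro s hs
        refine hQU fun j => ?_
        have hcoord : (z + s • EuclideanSpace.single i' (1 : ℝ)) j
            = z j + s * (if j = i' then 1 else 0) := by
          simp [PiLp.add_apply, PiLp.smul_apply, EuclideanSpace.single_apply]
        rw [hcoord]
        by_cases hj : j = i'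
        · rw [hj, if_pos rfl, mul_one, hzi]
          rw [abs_lt]
          rcases Set.mem_uIcc.mp hs with ⟨h1, h2⟩ | ⟨h1, h2⟩ <;> constructor <;>
            linarith [hd, hxj.1, hxj.2, hyj.1, hyj.2]
        · rw [if_neg hj, mul_zero, add_zero, hzdef, mixE_apply]
          by_cases hlt : (j : ℕ) < i
          · rw [if_pos hlt]; exact hy j
          · rw [if_neg hlt]; exact hx j
      have hstep := hGp 0 d hseg
      have h0 : z + (0 : ℝ) • EuclideanSpace.single i' (1 : ℝ) = z := by
        rw [zero_smul, add_zero]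
      have hsucc : mixE (i + 1) x y = z + d • EuclideanSpace.single i' (1 : ℝ) := by
        apply PiLp.ext
        intro j
        have hcoord : (z + d • EuclideanSpace.single i' (1 : ℝ)) j
            = z j + d * (if j = i' then 1 else 0) := by
          simp [PiLp.add_apply, PiLp.smul_apply, EuclideanSpace.single_apply]
        rw [hcoord, mixE_apply]
        by_cases hj : j = i'
        · rw [if_pos hj, mul_one, hj, hzi, hd]
          have : ((i' : Fin m) : ℕ) < i + 1 := Nat.lt_succ_self i
          rw [if_pos this]
          ring
        · have hne : (j : ℕ) ≠ i := fun h => hj (Fin.ext h)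
          rw [if_neg hj, mul_zero, add_zero, hzdef, mixE_apply]
          by_cases hlt : (j : ℕ) < i
          · rw [if_pos hlt, if_pos (Nat.lt_succ_of_lt hlt)]
          · rw [if_neg hlt, if_neg (by omega)]
      rw [hsucc, hstep, h0, hIHp]
  have hm := claim m le_rfl
  have hfinal : ∀ᵐ p ∂(μ.prod μ), β p.2 = β p.1 := by
    filter_upwards [hm] with p hp
    have hmm : mixE m p.1 p.2 = p.2 := by
      apply PiLp.ext
      intro j
      rw [mixE_apply, if_pos j.isLt]
    rwa [hmm] at hp
  have hae2 := Measure.ae_ae_of_ae_prod hfinal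
  have hμne : μ ≠ 0 := by
    rw [hμdef]
    intro h
    rw [Measure.restrict_eq_zero] at h
    exact (hQopen.measure_pos volume (cube_nonempty c hr)).ne' h
  haveI : (ae μ).NeBot := ae_neBot.mpr hμne
  obtain ⟨x₀, hx₀⟩ := hae2.exists
  refine ⟨β x₀, ?_⟩
  have hres : ∀ᵐ y ∂μ, β y = β x₀ := by
    filter_upwards [hx₀] with y hy using hy
  rw [hμdef] at hres
  exact (ae_restrict_iff' hQmeas).mp hres

lemma dist_le_sum_abs {m : ℕ} (z x : EuclideanSpace ℝ (Fin m)) :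
    dist z x ≤ ∑ j : Fin m, |z j - x j| := by
  rw [EuclideanSpace.dist_eq]
  have h1 : ∑ j : Fin m, dist (z j) (x j) ^ 2 ≤ (∑ j : Fin m, |z j - x j|) ^ 2 := by
    have := Finset.sum_sq_le_sq_sum_of_nonneg
      (f := fun j : Fin m => |z j - x j|) (s := Finset.univ) (fun i _ => abs_nonneg _)
    simpa [Real.dist_eq] using this
  calc Real.sqrt (∑ j : Fin m, dist (z j) (x j) ^ 2)
      ≤ Real.sqrt ((∑ j : Fin m, |z j - x j|) ^ 2) := Real.sqrt_le_sqrt h1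
    _ = ∑ j : Fin m, |z j - x j| :=
        Real.sqrt_sq (Finset.sum_nonneg fun i _ => abs_nonneg _)

lemma exists_rat_cube {m : ℕ} {U : Set (EuclideanSpace ℝ (Fin m))} (hU : IsOpen U)
    {x : EuclideanSpace ℝ (Fin m)} (hx : x ∈ U) :
    ∃ q : (Fin m → ℚ) × ℚ, 0 < ((q.2 : ℝ)) ∧
      x ∈ cube (fun j => (q.1 j : ℝ)) (q.2 : ℝ) ∧
      cube (fun j => (q.1 j : ℝ)) (q.2 : ℝ) ⊆ U := by
  obtain ⟨ε, hε, hball⟩ := Metric.isOpen_iff.mp hU x hx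
  have hεm : (0 : ℝ) < ε / (3 * (m + 1)) := by positivity
  obtain ⟨δ, hδ0, hδlt⟩ := exists_rat_btwn hεm
  rw [Rat.cast_pos] at hδ0
  have hδ0' : (0 : ℝ) < (δ : ℝ) := by exact_mod_cast hδ0
  have hc : ∀ j : Fin m, ∃ q : ℚ, |x j - (q : ℝ)| < (δ : ℝ) := fun j =>
    exists_rat_near (x j) hδ0'
  choose cq hcq using hc
  refine ⟨(cq, 2 * δ), by push_cast; linarith, fun j => ?_, ?_⟩
  · push_cast
    calc |x j - (cq j : ℝ)| < (δ : ℝ) := hcq j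
      _ ≤ 2 * (δ : ℝ) := by linarith
  · intro z hz
    apply hball
    rw [Metric.mem_ball]
    have hzj : ∀ j : Fin m, |z j - x j| ≤ 3 * (δ : ℝ) := by
      intro j
      have h1 := hz j
      push_cast at h1
      have h2 := hcq j
      calc |z j - x j| ≤ |z j - (cq j : ℝ)| + |(cq j : ℝ) - x j| := abs_sub_le _ _ _
        _ ≤ 2 * (δ : ℝ) + (δ : ℝ) := by
            refine add_le_add h1.le ?_
            rw [abs_sub_comm]
            exact (h2).le
        _ = 3 * (δ : ℝ) := by ring
    calc dist z x ≤ ∑ j : Fin m, |z j - x j| := dist_le_sum_abs z x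
      _ ≤ ∑ _j : Fin m, 3 * (δ : ℝ) := Finset.sum_le_sum fun j _ => hzj j
      _ = m * (3 * (δ : ℝ)) := by simp [Finset.sum_const, mul_comm]
      _ ≤ (m + 1) * (3 * (δ : ℝ)) := by nlinarith
      _ < ε := by
          have : (δ : ℝ) < ε / (3 * (m + 1)) := hδlt
          have h3 : (0:ℝ) < 3 * (m+1) := by positivity
          calc (m + 1) * (3 * (δ : ℝ)) = 3 * (m+1) * (δ:ℝ) := by ring
            _ < 3 * (m+1) * (ε / (3 * (m + 1))) := by
                exact mul_lt_mul_of_pos_left this h3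
            _ = ε := by field_simp

lemma overlap_eq {m k : ℕ} {β : EuclideanSpace ℝ (Fin m) → EuclideanSpace ℝ (Fin k)}
    {O : Set (EuclideanSpace ℝ (Fin m))} (hO : IsOpen O) (hne : O.Nonempty)
    {C C' : EuclideanSpace ℝ (Fin k)}
    (h1 : ∀ᵐ x ∂(volume : Measure (EuclideanSpace ℝ (Fin m))), x ∈ O → β x = C)
    (h2 : ∀ᵐ x ∂(volume : Measure (EuclideanSpace ℝ (Fin m))), x ∈ O → β x = C') :
    C = C' := by
  have hpos := hO.measure_pos (volume : Measure (EuclideanSpace ℝ (Fin m))) hne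
  have h := h1.and h2
  rw [Filter.eventually_iff, mem_ae_iff] at h
  have hns : ¬ (O ⊆ {x | (x ∈ O → β x = C) ∧ (x ∈ O → β x = C')}ᶜ) := by
    intro hsub
    exact absurd (measure_mono_null hsub h) hpos.ne'
  obtain ⟨a, haO, haS⟩ := Set.not_subset.mp hns
  rw [Set.notMem_compl_iff] at haS
  exact (haS.1 haO).symm.trans (haS.2 haO)

/-- The truncation argument: if `β : U → ℝ^k` is measurable on a connected open
`U ⊆ ℝ^m` and, for each coordinate direction and a.e. line parallel to it, every
componentwise truncation `β^T` is locally absolutely continuous along the line with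
derivative vanishing a.e. on the set where `|β_j| ≤ T`, then `β` is a.e. constant on `U`.
(Local absolute continuity with a.e. derivative `h` is expressed by the fundamental
theorem of calculus on segments contained in the domain.) -/
theorem truncation_constancy {m k : ℕ}
    (U : Set (EuclideanSpace ℝ (Fin m))) (hUopen : IsOpen U) (hUconn : IsConnected U)
    (β : EuclideanSpace ℝ (Fin m) → EuclideanSpace ℝ (Fin k)) (hβ : Measurable β)
    (hline : ∀ i : Fin m, ∀ T : ℝ, 0 < T →
      ∀ᵐ x ∂(volume : Measure (EuclideanSpace ℝ (Fin m))), ∀ j : Fin k,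
        ∃ h : ℝ → ℝ,
          (∀ᵐ s ∂(volume : Measure ℝ),
            (x + s • EuclideanSpace.single i (1 : ℝ) ∈ U ∧
              |β (x + s • EuclideanSpace.single i (1 : ℝ)) j| ≤ T) → h s = 0) ∧
          (∀ a b : ℝ,
            Set.uIcc a b ⊆ {s : ℝ | x + s • EuclideanSpace.single i (1 : ℝ) ∈ U} →
            IntervalIntegrable h volume a b ∧
              truncAt T (β (x + b • EuclideanSpace.single i (1 : ℝ)) j) -
                truncAt T (β (x + a • EuclideanSpace.single i (1 : ℝ)) j) =
              ∫ s in a..b, h s)) :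
    ∃ C : EuclideanSpace ℝ (Fin k),
      ∀ᵐ x ∂(volume : Measure (EuclideanSpace ℝ (Fin m))), x ∈ U → β x = C := by
  classical
  have hGood := good_ae U β hline
  set Idx := {q : (Fin m → ℚ) × ℚ //
    0 < ((q.2 : ℝ)) ∧ cube (fun j => ((q.1 j : ℝ))) (q.2 : ℝ) ⊆ U} with hIdx
  have hcube : ∀ q : Idx, ∃ C : EuclideanSpace ℝ (Fin k),
      ∀ᵐ x ∂(volume : Measure (EuclideanSpace ℝ (Fin m))),
        x ∈ cube (fun j => ((q.1.1 j : ℝ))) (q.1.2 : ℝ) → β x = C :=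
    fun q => cube_const hGood _ q.2.1 q.2.2
  choose C hC using hcube
  obtain ⟨x₀, hx₀⟩ := hUconn.nonempty
  obtain ⟨q₀p, hq₀r, hq₀x, hq₀U⟩ := exists_rat_cube hUopen hx₀
  set q₀ : Idx := ⟨q₀p, hq₀r, hq₀U⟩ with hq₀def
  have hallC : ∀ q : Idx, C q = C q₀ := by
    by_contra hbad
    push_neg at hbad
    obtain ⟨q₁, hq₁⟩ := hbad
    set V : Set (EuclideanSpace ℝ (Fin m)) :=
      ⋃ (q : Idx) (_ : C q = C q₀), cube (fun j => ((q.1.1 j : ℝ))) (q.1.2 : ℝ) with hVdef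
    set W : Set (EuclideanSpace ℝ (Fin m)) :=
      ⋃ (q : Idx) (_ : C q ≠ C q₀), cube (fun j => ((q.1.1 j : ℝ))) (q.1.2 : ℝ) with hWdef
    have hVopen : IsOpen V :=
      isOpen_iUnion fun q => isOpen_iUnion fun _ => cube_isOpen _ _
    have hWopen : IsOpen W :=
      isOpen_iUnion fun q => isOpen_iUnion fun _ => cube_isOpen _ _
    have hUVW : U ⊆ V ∪ W := by
      intro x hxU
      obtain ⟨qp, hr, hxq, hsub⟩ := exists_rat_cube hUopen hxU
      set qI : Idx := ⟨qp, hr, hsub⟩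
      by_cases hCeq : C qI = C q₀
      · exact Or.inl (Set.mem_iUnion₂.mpr ⟨qI, hCeq, hxq⟩)
      · exact Or.inr (Set.mem_iUnion₂.mpr ⟨qI, hCeq, hxq⟩)
    have hUV : (U ∩ V).Nonempty :=
      ⟨x₀, hx₀, Set.mem_iUnion₂.mpr ⟨q₀, rfl, hq₀x⟩⟩
    have hUW : (U ∩ W).Nonempty := by
      obtain ⟨z, hz⟩ := cube_nonempty (fun j => ((q₁.1.1 j : ℝ))) q₁.2.1
      exact ⟨z, q₁.2.2 hz, Set.mem_iUnion₂.mpr ⟨q₁, hq₁, hz⟩⟩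
    obtain ⟨z, hzU, hzV, hzW⟩ := hUconn.isPreconnected V W hVopen hWopen hUVW hUV hUW
    obtain ⟨qa, hqaC, hzqa⟩ := Set.mem_iUnion₂.mp hzV
    obtain ⟨qb, hqbC, hzqb⟩ := Set.mem_iUnion₂.mp hzW
    have hO : IsOpen (cube (fun j => ((qa.1.1 j : ℝ))) (qa.1.2 : ℝ)
        ∩ cube (fun j => ((qb.1.1 j : ℝ))) (qb.1.2 : ℝ)) :=
      (cube_isOpen _ _).inter (cube_isOpen _ _)
    have heq : C qa = C qb := by
      refine overlap_eq (β := β) hO ⟨z, hzqa, hzqb⟩ ?_ ?_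
      · filter_upwards [hC qa] with x hx hmem using hx hmem.1
      · filter_upwards [hC qb] with x hx hmem using hx hmem.2
    exact hqbC (heq ▸ hqaC)
  refine ⟨C q₀, ?_⟩
  have hall : ∀ᵐ x ∂(volume : Measure (EuclideanSpace ℝ (Fin m))),
      ∀ q : Idx, x ∈ cube (fun j => ((q.1.1 j : ℝ))) (q.1.2 : ℝ) → β x = C q :=
    ae_all_iff.mpr hC
  filter_upwards [hall] with x hx hxU
  obtain ⟨qp, hr, hxq, hsub⟩ := exists_rat_cube hUopen hxU
  rw [hx ⟨qp, hr, hsub⟩ hxq, hallC ⟨qp, hr, hsub⟩]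
end
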